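/- The split equilibrium problem SEP(f,g,C,Q) is Levitin–Polyak well-posed by perturbations in the generalized sense if and only if its solution set S is nonempty and compact and the Hausdorff distance H(S(ε), S) → 0 as ε → 0⁺. -/

import Mathlib

open Filter Metric Topology Set

/-- The solution set of the split equilibrium problem SEP(f,g,C,Q). -/
def SEPSol {E₁ E₂ : Type*} [NormedAddCommGroup E₁] [NormedSpace ℝ E₁]
    [NormedAddCommGroup E₂] [NormedSpace ℝ E₂]
    (C : Set E₁) (Q : Set E₂) (A : E₁ →L[ℝ] E₂)
    (f : E₁ → E₁ → ℝ) (g : E₂ → E₂ → ℝ) : Set (E₁ × E₂) :=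
  {u | u.1 ∈ C ∧ u.2 ∈ Q ∧ u.2 = A u.1 ∧
    (∀ x ∈ C, 0 ≤ f u.1 x) ∧ (∀ y ∈ Q, 0 ≤ g u.2 y)}

/-- The approximate solution set S(ε) of the perturbed split equilibrium problem,
where the perturbation parameter ranges over the closed ball M of radius `r`
centered at `pstar`, intersected with the closed ball of radius `ε` around `pstar`. -/
def approxSol {E₁ E₂ N : Type*} [NormedAddCommGroup E₁] [NormedSpace ℝ E₁]
    [NormedAddCommGroup E₂] [NormedSpace ℝ E₂] [NormedAddCommGroup N] [NormedSpace ℝ N]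
    (C : Set E₁) (Q : Set E₂) (A : E₁ →L[ℝ] E₂) (pstar : N) (r : ℝ)
    (ft : N → E₁ → E₁ → ℝ) (gt : N → E₂ → E₂ → ℝ) (ε : ℝ) : Set (E₁ × E₂) :=
  {u | ∃ p : N, ‖p - pstar‖ ≤ r ∧ ‖p - pstar‖ ≤ ε ∧
    infDist u.1 C ≤ ε ∧ infDist u.2 Q ≤ ε ∧ ‖u.2 - A u.1‖ ≤ ε ∧
    (∀ x ∈ C, -ε ≤ ft p u.1 x) ∧ (∀ y ∈ Q, -ε ≤ gt p u.2 y)}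

/-- `u` is a generalized approximating sequence corresponding to the parameter
sequence `p` (which lies in the ball M of radius `r` around `pstar` and converges
to `pstar`) for the split equilibrium problem. -/
def GenApproxSeq {E₁ E₂ N : Type*} [NormedAddCommGroup E₁] [NormedSpace ℝ E₁]
    [NormedAddCommGroup E₂] [NormedSpace ℝ E₂] [NormedAddCommGroup N] [NormedSpace ℝ N]
    (C : Set E₁) (Q : Set E₂) (A : E₁ →L[ℝ] E₂) (pstar : N) (r : ℝ)
    (ft : N → E₁ → E₁ → ℝ) (gt : N → E₂ → E₂ → ℝ)
    (p : ℕ → N) (u : ℕ → E₁ × E₂) : Prop :=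
  (∀ n, ‖p n - pstar‖ ≤ r) ∧ Tendsto p atTop (nhds pstar) ∧
  ∃ ε : ℕ → ℝ, (∀ n, 0 < ε n) ∧ Tendsto ε atTop (nhds 0) ∧
    ∀ n, infDist (u n).1 C ≤ ε n ∧ infDist (u n).2 Q ≤ ε n ∧
      ‖(u n).2 - A (u n).1‖ ≤ ε n ∧
      (∀ x ∈ C, -(ε n) ≤ ft (p n) (u n).1 x) ∧
      (∀ y ∈ Q, -(ε n) ≤ gt (p n) (u n).2 y)

/-- SEP(f,g,C,Q) is Levitin–Polyak well-posed by perturbations: the solution set is a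
singleton and every generalized approximating sequence converges to the unique solution. -/
def LPWellPosedPerturb {E₁ E₂ N : Type*} [NormedAddCommGroup E₁] [NormedSpace ℝ E₁]
    [NormedAddCommGroup E₂] [NormedSpace ℝ E₂] [NormedAddCommGroup N] [NormedSpace ℝ N]
    (C : Set E₁) (Q : Set E₂) (A : E₁ →L[ℝ] E₂) (pstar : N) (r : ℝ)
    (ft : N → E₁ → E₁ → ℝ) (gt : N → E₂ → E₂ → ℝ) : Prop :=
  ∃ ustar : E₁ × E₂, SEPSol C Q A (ft pstar) (gt pstar) = {ustar} ∧
    ∀ (p : ℕ → N) (u : ℕ → E₁ × E₂), GenApproxSeq C Q A pstar r ft gt p u →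
      Tendsto u atTop (nhds ustar)

/-- SEP(f,g,C,Q) is Levitin–Polyak well-posed by perturbations in the generalized sense:
the solution set is nonempty and every generalized approximating sequence has a
subsequence converging to some solution. -/
def GenLPWellPosedPerturb {E₁ E₂ N : Type*} [NormedAddCommGroup E₁] [NormedSpace ℝ E₁]
    [NormedAddCommGroup E₂] [NormedSpace ℝ E₂] [NormedAddCommGroup N] [NormedSpace ℝ N]
    (C : Set E₁) (Q : Set E₂) (A : E₁ →L[ℝ] E₂) (pstar : N) (r : ℝ)
    (ft : N → E₁ → E₁ → ℝ) (gt : N → E₂ → E₂ → ℝ) : Prop :=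
  (SEPSol C Q A (ft pstar) (gt pstar)).Nonempty ∧
    ∀ (p : ℕ → N) (u : ℕ → E₁ × E₂), GenApproxSeq C Q A pstar r ft gt p u →
      ∃ ustar ∈ SEPSol C Q A (ft pstar) (gt pstar), ∃ φ : ℕ → ℕ, StrictMono φ ∧
        Tendsto (u ∘ φ) atTop (nhds ustar)

/-- The Kuratowski measure of noncompactness: the infimum of all `ε > 0` such that the
set can be covered by finitely many sets, each of diameter `< ε`. -/
noncomputable def kuratowskiMNC {X : Type*} [PseudoEMetricSpace X] (s : Set X) : ENNReal :=
  sInf {ε : ENNReal | 0 < ε ∧ ∃ t : Finset (Set X), (s ⊆ ⋃ a ∈ t, (a : Set X)) ∧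
    ∀ a ∈ t, EMetric.diam a < ε}


private lemma edist_tendsto_zero_of_tendsto' {X : Type*} [PseudoEMetricSpace X]
    {f : ℕ → X} {a : X}
    (h : Tendsto f atTop (nhds a)) : Tendsto (fun n => edist (f n) a) atTop (nhds 0) := by
  rw [EMetric.tendsto_nhds] at h
  rw [ENNReal.tendsto_nhds_zero]
  intro ε hε
  exact (h ε hε).mono fun n hn => hn.le

private lemma tendsto_of_edist_tendsto_zero'  {X : Type*} [PseudoEMetricSpace X]
    {f : ℕ → X} {a : X}
    (h : Tendsto (fun n => edist (f n) a) atTop (nhds 0)) : Tendsto f atTop (nhds a) := by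
  rw [EMetric.tendsto_nhds]
  intro ε hε
  exact h.eventually (eventually_iff.2 (gt_mem_nhds hε))

/-- **Theorem 4.3.** SEP(f,g,C,Q) is Levitin–Polyak well-posed by perturbations in the
generalized sense if and only if its solution set S is nonempty and compact and
H(S(ε), S) → 0 as ε → 0⁺. -/
theorem sep_gen_lp_wellposed_iff_hausdorff_tendsto_zero
    {E₁ E₂ N : Type*} [NormedAddCommGroup E₁] [NormedSpace ℝ E₁] [CompleteSpace E₁]
    [NormedAddCommGroup E₂] [NormedSpace ℝ E₂] [CompleteSpace E₂]
    [NormedAddCommGroup N] [NormedSpace ℝ N]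
    (C : Set E₁) (Q : Set E₂) (hCne : C.Nonempty) (hCcl : IsClosed C) (hCcv : Convex ℝ C)
    (hQne : Q.Nonempty) (hQcl : IsClosed Q) (hQcv : Convex ℝ Q)
    (A : E₁ →L[ℝ] E₂) (pstar : N) (r : ℝ) (hr : 0 < r)
    (ftil : N → E₁ → E₁ → ℝ) (gtil : N → E₂ → E₂ → ℝ) :
    GenLPWellPosedPerturb C Q A pstar r ftil gtil ↔
      (SEPSol C Q A (ftil pstar) (gtil pstar)).Nonempty ∧
        IsCompact (SEPSol C Q A (ftil pstar) (gtil pstar)) ∧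
        Tendsto (fun ε : ℝ => EMetric.hausdorffEdist
            (approxSol C Q A pstar r ftil gtil ε) (SEPSol C Q A (ftil pstar) (gtil pstar)))
          (𝓝[>] (0 : ℝ)) (nhds 0) := by
  set S := SEPSol C Q A (ftil pstar) (gtil pstar) with hSdef
  have hsub : ∀ ε : ℝ, 0 ≤ ε → S ⊆ approxSol C Q A pstar r ftil gtil ε := by
    intro ε hε u hu
    obtain ⟨h1, h2, h3, h4, h5⟩ := hu
    refine ⟨pstar, by simpa using hr.le, by simpa using hε,
      (infDist_zero_of_mem h1).le.trans hε,
      (infDist_zero_of_mem h2).le.trans hε, ?_, ?_, ?_⟩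
    · rw [h3, sub_self, norm_zero]; exact hε
    · intro x hx; linarith [h4 x hx]
    · intro y hy; linarith [h5 y hy]
  constructor
  · rintro ⟨hne, hwp⟩
    have hScompact : IsCompact S := by
      apply IsSeqCompact.isCompact
      intro u hu
      have hgas : GenApproxSeq C Q A pstar r ftil gtil (fun _ => pstar) u := by
        refine ⟨fun n => by simpa using hr.le, tendsto_const_nhds,
          fun n => 1 / (n + 1), fun n => by positivity,
          tendsto_one_div_add_atTop_nhds_zero_nat, fun n => ?_⟩
        obtain ⟨h1, h2, h3, h4, h5⟩ := hu n
        have hεn : (0 : ℝ) ≤ 1 / (n + 1) := by positivity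
        refine ⟨(infDist_zero_of_mem h1).le.trans hεn,
          (infDist_zero_of_mem h2).le.trans hεn, ?_, ?_, ?_⟩
        · rw [h3, sub_self, norm_zero]; exact hεn
        · intro x hx; linarith [h4 x hx]
        · intro y hy; linarith [h5 y hy]
      exact hwp _ _ hgas
    refine ⟨hne, hScompact, ?_⟩
    rw [ENNReal.tendsto_nhds_zero]
    intro δ hδ
    by_contra hcon
    rw [Filter.not_eventually] at hcon
    have hseq : ∀ n : ℕ, ∃ ε : ℝ, (ε ∈ Ioo (0:ℝ) (1/(n+1))) ∧
        ¬ (EMetric.hausdorffEdist (approxSol C Q A pstar r ftil gtil ε) S ≤ δ) := by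
      intro n
      have hmem : Ioo (0:ℝ) (1/(n+1)) ∈ 𝓝[>] (0:ℝ) :=
        Ioo_mem_nhdsGT_of_mem ⟨le_refl 0, by positivity⟩
      obtain ⟨x, hx1, hx2⟩ :=
        (hcon.and_eventually (eventually_of_mem hmem (fun x hx => hx))).exists
      exact ⟨x, hx2, hx1⟩
    choose ε hεIoo hεne using hseq
    have hεpos : ∀ n, 0 < ε n := fun n => (hεIoo n).1
    have hex : ∀ n, ∃ v ∈ approxSol C Q A pstar r ftil gtil (ε n),
        δ < EMetric.infEdist v S := by
      intro n
      by_contra h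
      push_neg at h
      refine hεne n (EMetric.hausdorffEdist_le_of_infEdist h ?_)
      intro y hy
      have : y ∈ approxSol C Q A pstar r ftil gtil (ε n) := hsub _ (hεpos n).le hy
      simp [EMetric.infEdist_zero_of_mem this]
    choose u hu hgt using hex
    choose p hp1 hp2 hp3 hp4 hp5 hp6 hp7 using hu
    have hεtend : Tendsto ε atTop (nhds 0) := by
      refine tendsto_of_tendsto_of_tendsto_of_le_of_le tendsto_const_nhds
        tendsto_one_div_add_atTop_nhds_zero_nat (fun n => (hεpos n).le)
        (fun n => (hεIoo n).2.le)
    have hptend : Tendsto p atTop (nhds pstar) := by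
      rw [tendsto_iff_norm_sub_tendsto_zero]
      exact tendsto_of_tendsto_of_tendsto_of_le_of_le tendsto_const_nhds hεtend
        (fun n => norm_nonneg _) hp2
    have hgas : GenApproxSeq C Q A pstar r ftil gtil p u :=
      ⟨hp1, hptend, ε, hεpos, hεtend, fun n => ⟨hp3 n, hp4 n, hp5 n, hp6 n, hp7 n⟩⟩
    obtain ⟨v, hvS, φ, hφ, hconv⟩ := hwp _ _ hgas
    have : ∀ᶠ n in atTop, edist (u (φ n)) v < δ := by
      have h0 : Tendsto (fun n => edist (u (φ n)) v) atTop (nhds 0) :=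
        edist_tendsto_zero_of_tendsto' hconv
      exact h0.eventually (eventually_iff.2 (gt_mem_nhds hδ))
    obtain ⟨n, hn⟩ := this.exists
    exact absurd ((hgt (φ n)).trans_le (EMetric.infEdist_le_edist_of_mem hvS)) (not_lt.2 hn.le)
  · rintro ⟨hne, hcomp, htend⟩
    refine ⟨hne, ?_⟩
    intro p u hgas
    obtain ⟨hpr, hptend, ε, hεpos, hεtend, hcond⟩ := hgas
    set η : ℕ → ℝ := fun n => max (ε n) ‖p n - pstar‖ with hηdef
    have hηpos : ∀ n, 0 < η n := fun n => lt_max_of_lt_left (hεpos n)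
    have hηtend : Tendsto η atTop (nhds 0) := by
      have hn : Tendsto (fun n => ‖p n - pstar‖) atTop (nhds 0) :=
        tendsto_iff_norm_sub_tendsto_zero.mp hptend
      have := hεtend.max hn
      simpa using this
    have hmem : ∀ n, u n ∈ approxSol C Q A pstar r ftil gtil (η n) := by
      intro n
      obtain ⟨h1, h2, h3, h4, h5⟩ := hcond n
      refine ⟨p n, hpr n, le_max_right _ _, h1.trans (le_max_left _ _),
        h2.trans (le_max_left _ _), h3.trans (le_max_left _ _), ?_, ?_⟩
      · intro x hx
        have := h4 x hx
        have h' : -(η n) ≤ -(ε n) := neg_le_neg (le_max_left _ _)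
        linarith
      · intro y hy
        have := h5 y hy
        have h' : -(η n) ≤ -(ε n) := neg_le_neg (le_max_left _ _)
        linarith
    have hηmem : Tendsto η atTop (𝓝[>] (0:ℝ)) :=
      tendsto_nhdsWithin_of_tendsto_nhds_of_eventually_within _ hηtend
        (Filter.Eventually.of_forall hηpos)
    have hdist : Tendsto (fun n => EMetric.infEdist (u n) S) atTop (nhds 0) :=
      tendsto_of_tendsto_of_tendsto_of_le_of_le tendsto_const_nhds (htend.comp hηmem)
        (fun n => zero_le)
        (fun n => EMetric.infEdist_le_hausdorffEdist_of_mem (hmem n))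
    have hvex : ∀ n, ∃ v ∈ S, EMetric.infEdist (u n) S = edist (u n) v :=
      fun n => hcomp.exists_infEdist_eq_edist hne (u n)
    choose v hvS hve using hvex
    obtain ⟨w, hwS, φ, hφ, hvconv⟩ := hcomp.isSeqCompact hvS
    refine ⟨w, hwS, φ, hφ, ?_⟩
    apply tendsto_of_edist_tendsto_zero'
    have h1 : Tendsto (fun n => edist (u (φ n)) (v (φ n))) atTop (nhds 0) := by
      have := hdist.comp hφ.tendsto_atTop
      simpa [Function.comp_def, hve] using this
    have h2 : Tendsto (fun n => edist (v (φ n)) w) atTop (nhds 0) :=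
      edist_tendsto_zero_of_tendsto' hvconv
    have hsum : Tendsto (fun n => edist (u (φ n)) (v (φ n)) + edist (v (φ n)) w)
        atTop (nhds 0) := by
      have := h1.add h2
      simpa using this
    exact tendsto_of_tendsto_of_tendsto_of_le_of_le tendsto_const_nhds hsum
      (fun n => zero_le) (fun n => edist_triangle _ _ _)
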